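/- (Identification theorem.) Suppose Consistency, Unconfoundedness (in both regimes), No Unprecedented Decisions, Stable CATE, and No Feedback hold, and P_post(A = a) > 0. Then P_post(Y = y | A = a) equals the sum over (x, d) in Π_post = {(x, d) : P_post(X = x, D = d | A = a) > 0} of P_pre(Y = y | A = a, X = x, D = d) · P_pre(X = x | A = a) · P_post(D = d | A = a, X = x). -/

import Mathlib

open scoped Classical
open Finset

/-- Probability of an event under a finite distribution `p`. -/
noncomputable def Pr {Ω : Type*} [Fintype Ω] (p : Ω → ℝ) (E : Ω → Prop) : ℝ :=
  ∑ ω, if E ω then p ω else 0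

/-- Conditional probability `P(E | F)` as a ratio of probabilities. -/
noncomputable def cPr {Ω : Type*} [Fintype Ω] (p : Ω → ℝ) (E F : Ω → Prop) : ℝ :=
  Pr p (fun ω => E ω ∧ F ω) / Pr p F


section helpers
variable {Ω : Type*} [Fintype Ω] {p : Ω → ℝ}

lemma Pr_congr {E F : Ω → Prop} (h : ∀ ω, E ω ↔ F ω) : Pr p E = Pr p F :=
  Finset.sum_congr rfl fun ω _ => by rw [h ω]

lemma Pr_nonneg (hp : ∀ ω, 0 ≤ p ω) (E : Ω → Prop) : 0 ≤ Pr p E :=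
  Finset.sum_nonneg fun ω _ => by split; exacts [hp ω, le_rfl]

lemma Pr_mono (hp : ∀ ω, 0 ≤ p ω) {E F : Ω → Prop} (h : ∀ ω, E ω → F ω) :
    Pr p E ≤ Pr p F := by
  refine Finset.sum_le_sum fun ω _ => ?_
  by_cases hE : E ω
  · simp [hE, h ω hE]
  · simp only [hE, if_false]
    split; exacts [hp ω, le_rfl]

lemma Pr_fiber {T : Type*} [Fintype T] (f : Ω → T) (E : Ω → Prop) :
    Pr p E = ∑ t, Pr p (fun ω => E ω ∧ f ω = t) := by
  unfold Pr
  rw [Finset.sum_comm]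
  refine Finset.sum_congr rfl fun ω _ => ?_
  by_cases hE : E ω <;> simp [hE]

lemma pos_num_of_pos_div {x z : ℝ} (hz : 0 < z) (h : 0 < x / z) : 0 < x := by
  have := mul_pos h hz
  rwa [div_mul_cancel₀ _ hz.ne'] at this

end helpers

/-- Identification theorem: under Consistency, Unconfoundedness (both regimes),
No Unprecedented Decisions, Stable CATE, No Feedback and `P_post(A = a) > 0`,
`P_post(Y = y | A = a)` equals the sum over the post-deployment support `Π_post` of
`P_pre(Y = y | A = a, X = x, D = d) · P_pre(X = x | A = a) · P_post(D = d | A = a, X = x)`. -/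
theorem identification
    {Ω₁ Ω₂ 𝒜 𝒳 𝒟 𝒴 : Type*} [Fintype Ω₁] [Fintype Ω₂] [Fintype 𝒳] [Fintype 𝒟]
    (ppre : Ω₁ → ℝ) (ppost : Ω₂ → ℝ)
    (A₁ : Ω₁ → 𝒜) (X₁ : Ω₁ → 𝒳) (D₁ : Ω₁ → 𝒟) (Y₁ : Ω₁ → 𝒴) (Yd₁ : 𝒟 → Ω₁ → 𝒴)
    (A₂ : Ω₂ → 𝒜) (X₂ : Ω₂ → 𝒳) (D₂ : Ω₂ → 𝒟) (Y₂ : Ω₂ → 𝒴) (Yd₂ : 𝒟 → Ω₂ → 𝒴)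
    (hpre0 : ∀ ω, 0 ≤ ppre ω) (hpost0 : ∀ ω, 0 ≤ ppost ω)
    (hcons₁ : ∀ ω, Y₁ ω = Yd₁ (D₁ ω) ω) (hcons₂ : ∀ ω, Y₂ ω = Yd₂ (D₂ ω) ω)
    (hunc₁ : ∀ (d : 𝒟) (y : 𝒴) (a : 𝒜) (x : 𝒳),
      0 < Pr ppre (fun ω => A₁ ω = a ∧ X₁ ω = x) →
      cPr ppre (fun ω => Yd₁ d ω = y ∧ D₁ ω = d) (fun ω => A₁ ω = a ∧ X₁ ω = x)
        = cPr ppre (fun ω => Yd₁ d ω = y) (fun ω => A₁ ω = a ∧ X₁ ω = x)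
          * cPr ppre (fun ω => D₁ ω = d) (fun ω => A₁ ω = a ∧ X₁ ω = x))
    (hunc₂ : ∀ (d : 𝒟) (y : 𝒴) (a : 𝒜) (x : 𝒳),
      0 < Pr ppost (fun ω => A₂ ω = a ∧ X₂ ω = x) →
      cPr ppost (fun ω => Yd₂ d ω = y ∧ D₂ ω = d) (fun ω => A₂ ω = a ∧ X₂ ω = x)
        = cPr ppost (fun ω => Yd₂ d ω = y) (fun ω => A₂ ω = a ∧ X₂ ω = x)
          * cPr ppost (fun ω => D₂ ω = d) (fun ω => A₂ ω = a ∧ X₂ ω = x))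
    (hNUD : ∀ (a : 𝒜) (x : 𝒳) (d : 𝒟),
      0 < cPr ppost (fun ω => D₂ ω = d) (fun ω => A₂ ω = a ∧ X₂ ω = x) →
      0 < cPr ppre (fun ω => D₁ ω = d) (fun ω => A₁ ω = a ∧ X₁ ω = x))
    (hCATE : ∀ (d : 𝒟) (y : 𝒴) (a : 𝒜) (x : 𝒳),
      cPr ppre (fun ω => Yd₁ d ω = y) (fun ω => A₁ ω = a ∧ X₁ ω = x)
        = cPr ppost (fun ω => Yd₂ d ω = y) (fun ω => A₂ ω = a ∧ X₂ ω = x))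
    (hNF : ∀ (a : 𝒜) (x : 𝒳),
      Pr ppre (fun ω => A₁ ω = a ∧ X₁ ω = x) = Pr ppost (fun ω => A₂ ω = a ∧ X₂ ω = x))
    (a : 𝒜) (y : 𝒴)
    (ha : 0 < Pr ppost (fun ω => A₂ ω = a)) :
    cPr ppost (fun ω => Y₂ ω = y) (fun ω => A₂ ω = a)
      = ∑ xd ∈ Finset.univ.filter
          (fun xd : 𝒳 × 𝒟 =>
            0 < cPr ppost (fun ω => X₂ ω = xd.1 ∧ D₂ ω = xd.2) (fun ω => A₂ ω = a)),
          cPr ppre (fun ω => Y₁ ω = y)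
              (fun ω => A₁ ω = a ∧ X₁ ω = xd.1 ∧ D₁ ω = xd.2)
            * cPr ppre (fun ω => X₁ ω = xd.1) (fun ω => A₁ ω = a)
            * cPr ppost (fun ω => D₂ ω = xd.2) (fun ω => A₂ ω = a ∧ X₂ ω = xd.1) := by
  classical
  have hA : Pr ppre (fun ω => A₁ ω = a) = Pr ppost (fun ω => A₂ ω = a) := by
    rw [Pr_fiber X₁ (fun ω => A₁ ω = a), Pr_fiber X₂ (fun ω => A₂ ω = a)]
    exact Finset.sum_congr rfl fun x _ => hNF a x
  have hsplit : Pr ppost (fun ω => Y₂ ω = y ∧ A₂ ω = a)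
      = ∑ xd : 𝒳 × 𝒟,
          Pr ppost (fun ω => (Y₂ ω = y ∧ X₂ ω = xd.1 ∧ D₂ ω = xd.2) ∧ A₂ ω = a) := by
    rw [Pr_fiber (fun ω => (X₂ ω, D₂ ω)) (fun ω => Y₂ ω = y ∧ A₂ ω = a)]
    refine Finset.sum_congr rfl fun xd _ => Pr_congr fun ω => ?_
    rw [Prod.ext_iff]
    dsimp only
    tauto
  have hstep : cPr ppost (fun ω => Y₂ ω = y) (fun ω => A₂ ω = a)
      = ∑ xd : 𝒳 × 𝒟,
          cPr ppost (fun ω => Y₂ ω = y ∧ X₂ ω = xd.1 ∧ D₂ ω = xd.2)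
            (fun ω => A₂ ω = a) := by
    simp only [cPr]
    rw [hsplit, Finset.sum_div]
  have h0 : ∀ xd : 𝒳 × 𝒟, xd ∈ (Finset.univ : Finset (𝒳 × 𝒟)) →
      cPr ppost (fun ω => Y₂ ω = y ∧ X₂ ω = xd.1 ∧ D₂ ω = xd.2)
        (fun ω => A₂ ω = a) ≠ 0 →
      0 < cPr ppost (fun ω => X₂ ω = xd.1 ∧ D₂ ω = xd.2) (fun ω => A₂ ω = a) := by
    intro xd _ hne
    simp only [cPr] at hne ⊢
    have hnum0 : 0 ≤ Pr ppost
        (fun ω => (Y₂ ω = y ∧ X₂ ω = xd.1 ∧ D₂ ω = xd.2) ∧ A₂ ω = a) :=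
      Pr_nonneg hpost0 _
    have hfpos : 0 < Pr ppost
        (fun ω => (Y₂ ω = y ∧ X₂ ω = xd.1 ∧ D₂ ω = xd.2) ∧ A₂ ω = a) := by
      rcases hnum0.lt_or_eq with h | h
      · exact h
      · exact absurd (by rw [← h, zero_div]) hne
    exact div_pos (lt_of_lt_of_le hfpos (Pr_mono hpost0 fun ω h => ⟨⟨h.1.2.1, h.1.2.2⟩, h.2⟩)) ha
  rw [hstep, ← Finset.sum_filter_of_ne h0]
  refine Finset.sum_congr rfl fun xd hxd => ?_
  obtain ⟨x, d⟩ := xd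
  have hmem := (Finset.mem_filter.mp hxd).2
  dsimp only at hmem ⊢
  have hP2 : 0 < Pr ppost (fun ω => (X₂ ω = x ∧ D₂ ω = d) ∧ A₂ ω = a) := by
    have h := hmem
    simp only [cPr] at h
    exact pos_num_of_pos_div ha h
  have hβ : 0 < Pr ppost (fun ω => A₂ ω = a ∧ X₂ ω = x) :=
    lt_of_lt_of_le hP2 (Pr_mono hpost0 fun ω h => ⟨h.2, h.1.1⟩)
  have hr2 : Pr ppost (fun ω => D₂ ω = d ∧ (A₂ ω = a ∧ X₂ ω = x))
      = Pr ppost (fun ω => (X₂ ω = x ∧ D₂ ω = d) ∧ A₂ ω = a) :=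
    Pr_congr fun ω => by tauto
  have hdpos2 : 0 < cPr ppost (fun ω => D₂ ω = d) (fun ω => A₂ ω = a ∧ X₂ ω = x) := by
    simp only [cPr]
    exact div_pos (by rw [hr2]; exact hP2) hβ
  have hγ : Pr ppre (fun ω => A₁ ω = a ∧ X₁ ω = x)
      = Pr ppost (fun ω => A₂ ω = a ∧ X₂ ω = x) := hNF a x
  have hβ1 : 0 < Pr ppre (fun ω => A₁ ω = a ∧ X₁ ω = x) := by rw [hγ]; exact hβ
  have hδ := hNUD a x d hdpos2
  have hr1 : 0 < Pr ppre (fun ω => D₁ ω = d ∧ (A₁ ω = a ∧ X₁ ω = x)) := by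
    have h := hδ
    simp only [cPr] at h
    exact pos_num_of_pos_div hβ1 h
  have hu2 := hunc₂ d y a x hβ
  have hu1 := hunc₁ d y a x hβ1
  have hc := hCATE d y a x
  have hq : Pr ppre (fun ω => Yd₁ d ω = y ∧ (A₁ ω = a ∧ X₁ ω = x))
      = Pr ppost (fun ω => Yd₂ d ω = y ∧ (A₂ ω = a ∧ X₂ ω = x)) := by
    simp only [cPr, hγ] at hc
    field_simp at hc
    exact hc
  have e1 : Pr ppost (fun ω => (Y₂ ω = y ∧ X₂ ω = x ∧ D₂ ω = d) ∧ A₂ ω = a)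
      = Pr ppost (fun ω => (Yd₂ d ω = y ∧ D₂ ω = d) ∧ (A₂ ω = a ∧ X₂ ω = x)) :=
    Pr_congr fun ω => by
      constructor
      · rintro ⟨⟨hy, hx, hd⟩, ha'⟩
        refine ⟨⟨?_, hd⟩, ha', hx⟩
        rw [← hd, ← hcons₂ ω]; exact hy
      · rintro ⟨⟨hy, hd⟩, ha', hx⟩
        refine ⟨⟨?_, hx, hd⟩, ha'⟩
        rw [hcons₂ ω, hd]; exact hy
  have e2 : Pr ppre (fun ω => Y₁ ω = y ∧ (A₁ ω = a ∧ X₁ ω = x ∧ D₁ ω = d))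
      = Pr ppre (fun ω => (Yd₁ d ω = y ∧ D₁ ω = d) ∧ (A₁ ω = a ∧ X₁ ω = x)) :=
    Pr_congr fun ω => by
      constructor
      · rintro ⟨hy, ha', hx, hd⟩
        refine ⟨⟨?_, hd⟩, ha', hx⟩
        rw [← hd, ← hcons₁ ω]; exact hy
      · rintro ⟨⟨hy, hd⟩, ha', hx⟩
        exact ⟨by rw [hcons₁ ω, hd]; exact hy, ha', hx, hd⟩
  have e3 : Pr ppre (fun ω => A₁ ω = a ∧ X₁ ω = x ∧ D₁ ω = d)
      = Pr ppre (fun ω => D₁ ω = d ∧ (A₁ ω = a ∧ X₁ ω = x)) := Pr_congr fun ω => by tauto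
  have e5 : Pr ppre (fun ω => X₁ ω = x ∧ A₁ ω = a)
      = Pr ppost (fun ω => A₂ ω = a ∧ X₂ ω = x) := by
    rw [← hγ]; exact Pr_congr fun ω => by tauto
  simp only [cPr] at hu1 hu2 ⊢
  rw [hγ, hq] at hu1
  rw [e1, e2, e3, e5, hA]
  field_simp at hu1 hu2
  have k1 : (Pr ppre fun ω => (Yd₁ d ω = y ∧ D₁ ω = d) ∧ A₁ ω = a ∧ X₁ ω = x)
        * (Pr ppost fun ω => A₂ ω = a ∧ X₂ ω = x)
      = (Pr ppost fun ω => Yd₂ d ω = y ∧ A₂ ω = a ∧ X₂ ω = x)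
        * (Pr ppre fun ω => D₁ ω = d ∧ A₁ ω = a ∧ X₁ ω = x) :=
    mul_right_cancel₀ hβ.ne' (by linear_combination (Pr ppost fun ω => A₂ ω = a ∧ X₂ ω = x) * hu1)
  have k2 : (Pr ppost fun ω => (Yd₂ d ω = y ∧ D₂ ω = d) ∧ A₂ ω = a ∧ X₂ ω = x)
        * (Pr ppost fun ω => A₂ ω = a ∧ X₂ ω = x)
      = (Pr ppost fun ω => Yd₂ d ω = y ∧ A₂ ω = a ∧ X₂ ω = x)
        * (Pr ppost fun ω => D₂ ω = d ∧ A₂ ω = a ∧ X₂ ω = x) :=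
    mul_right_cancel₀ hβ.ne' (by linear_combination (Pr ppost fun ω => A₂ ω = a ∧ X₂ ω = x) * hu2)
  field_simp
  refine mul_right_cancel₀ hβ.ne' ?_
  linear_combination
      ((Pr ppre fun ω => D₁ ω = d ∧ A₁ ω = a ∧ X₁ ω = x) * k2
        - (Pr ppost fun ω => D₂ ω = d ∧ A₂ ω = a ∧ X₂ ω = x) * k1)
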